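/- arXiv:1403.3708 — 4 statements merged into one kernel-verified Lean document; each statement's English description precedes it below -/
import Mathlib

section
/- For 0 < γ < 1 and y < t_c < t, the integral W(y, t, t_c) := ∫_{t_c}^{t} (τ−y)^{γ}(t−τ)^{−γ} dτ equals γπ·csc(πγ)·(t−y) − (1/(1+γ))·(t_c−y)^{1+γ}·(t−y)^{−γ} · ₂F₁(1+γ, γ; 2+γ; (t_c−y)/(t−y)). -/
open MeasureTheory Set Real Filter

private lemma poch_pos {c : ℝ} (hc : 0 < c) (n : ℕ) : 0 < (ascPochhammer ℝ n).eval c := by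
  induction n with
  | zero => simp
  | succ n ih =>
    rw [ascPochhammer_succ_eval]
    exact mul_pos ih (by positivity)

private lemma poch_le_factorial {c : ℝ} (hc1 : c ≤ 1) (hc0 : 0 < c) (n : ℕ) :
    (ascPochhammer ℝ n).eval c ≤ n.factorial := by
  induction n with
  | zero => simp
  | succ n ih =>
    rw [ascPochhammer_succ_eval, Nat.factorial_succ]
    push_cast
    have h1 : c + n ≤ (n : ℝ) + 1 := by linarith
    calc (ascPochhammer ℝ n).eval c * (c + n) ≤ (n.factorial : ℝ) * ((n:ℝ)+1) :=
          mul_le_mul ih h1 (by positivity) (by positivity)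
      _ = ((n:ℝ)+1) * n.factorial := by ring

private lemma summable_binom {γ : ℝ} (hγ0 : 0 < γ) (hγ1 : γ < 1) {x : ℝ} (hx : |x| < 1) :
    Summable (fun n : ℕ => (ascPochhammer ℝ n).eval γ * x ^ n / n.factorial) := by
  apply Summable.of_norm
  refine Summable.of_nonneg_of_le (fun n => norm_nonneg _) (fun n => ?_)
    (summable_geometric_of_lt_one (abs_nonneg x) hx)
  have hp := poch_pos hγ0 n
  have hf : (0:ℝ) < n.factorial := by positivity
  rw [Real.norm_eq_abs, abs_div, abs_mul, abs_pow, abs_of_pos hp,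
    abs_of_pos hf, div_le_iff₀ hf]
  calc (ascPochhammer ℝ n).eval γ * |x| ^ n ≤ (n.factorial : ℝ) * |x| ^ n :=
        mul_le_mul_of_nonneg_right (poch_le_factorial hγ1.le hγ0 n) (by positivity)
    _ = |x| ^ n * n.factorial := by ring

private lemma summable_deriv_aux {r : ℝ} (h0 : 0 ≤ r) (h1 : r < 1) :
    Summable (fun n : ℕ => (n : ℝ) * r ^ (n - 1)) := by
  rw [← summable_nat_add_iff 1]
  simp only [Nat.add_sub_cancel]
  have := (summable_pow_mul_geometric_of_norm_lt_one 1
      (r := r) (by rwa [Real.norm_eq_abs, abs_of_nonneg h0])).add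
    (summable_geometric_of_lt_one h0 h1)
  refine this.congr fun n => ?_
  push_cast
  ring

private lemma hasSum_congr' {f g : ℕ → ℝ} {a : ℝ} (h : ∀ n, f n = g n) (hf : HasSum f a) :
    HasSum g a := (funext h : f = g) ▸ hf

private lemma binom_tsum {γ : ℝ} (hγ0 : 0 < γ) (hγ1 : γ < 1) {x : ℝ} (hx0 : 0 ≤ x)
    (hx1 : x < 1) :
    (∑' n : ℕ, (ascPochhammer ℝ n).eval γ * x ^ n / n.factorial) = (1 - x) ^ (-γ) := by
  set P : ℕ → ℝ := fun n => (ascPochhammer ℝ n).eval γ with hP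
  set f : ℝ → ℝ := fun y => ∑' n : ℕ, P n * y ^ n / n.factorial with hf
  set f' : ℝ → ℝ := fun y => ∑' n : ℕ, (P n / n.factorial) * ((n : ℝ) * y ^ (n - 1)) with hf'
  -- derivative of the power series
  have hderiv : ∀ y ∈ Ioo (-1 : ℝ) 1, HasDerivAt f (f' y) y := by
    intro y hy
    have hyabs : |y| < 1 := abs_lt.mpr ⟨hy.1, hy.2⟩
    set r : ℝ := (|y| + 1) / 2 with hr
    have hr0 : 0 < r := by positivity
    have hyr : |y| < r := by rw [hr]; linarith
    have hr1 : r < 1 := by rw [hr]; linarith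
    have hu : Summable (fun n : ℕ => (n : ℝ) * r ^ (n - 1)) := summable_deriv_aux hr0.le hr1
    have hgd : ∀ (n : ℕ) (z : ℝ), z ∈ Ioo (-r) r →
        HasDerivAt (fun w => P n * w ^ n / n.factorial)
          ((P n / n.factorial) * ((n : ℝ) * z ^ (n - 1))) z := by
      intro n z _
      have h := (hasDerivAt_pow n z).const_mul (P n / n.factorial)
      have hfun : (fun w : ℝ => P n / n.factorial * w ^ n)
          = fun w => P n * w ^ n / n.factorial := by
        funext w; ring
      rwa [hfun] at h
    have hbd : ∀ (n : ℕ) (z : ℝ), z ∈ Ioo (-r) r →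
        ‖(P n / n.factorial) * ((n : ℝ) * z ^ (n - 1))‖ ≤ (n : ℝ) * r ^ (n - 1) := by
      intro n z hz
      have hzr : |z| ≤ r := (abs_lt.mpr ⟨hz.1, hz.2⟩).le
      have hp := poch_pos hγ0 n
      have hfa : (0:ℝ) < n.factorial := by positivity
      rw [Real.norm_eq_abs, abs_mul, abs_mul, abs_div, abs_of_pos hp, abs_of_pos hfa,
        Nat.abs_cast, abs_pow]
      have h1 : P n / n.factorial ≤ 1 := by
        rw [div_le_one hfa]; exact poch_le_factorial hγ1.le hγ0 n
      have h2 : |z| ^ (n-1) ≤ r ^ (n-1) := pow_le_pow_left₀ (abs_nonneg z) hzr _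
      calc P n / n.factorial * ((n:ℝ) * |z| ^ (n-1)) ≤ 1 * ((n:ℝ) * r ^ (n-1)) := by
            apply mul_le_mul h1 _ (by positivity) zero_le_one
            exact mul_le_mul_of_nonneg_left h2 (Nat.cast_nonneg n)
        _ = (n:ℝ) * r ^ (n-1) := one_mul _
    have hg0 : Summable fun n : ℕ => P n * (0:ℝ) ^ n / n.factorial :=
      summable_binom hγ0 hγ1 (by simp)
    exact hasDerivAt_tsum_of_isPreconnected hu isOpen_Ioo (convex_Ioo _ _).isPreconnected
      hgd hbd (by constructor <;> simp [hr0] : (0:ℝ) ∈ Ioo (-r) r) hg0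
      (abs_lt.mp hyr |> fun h => ⟨h.1, h.2⟩)
  -- the ODE
  have key : ∀ y : ℝ, 0 ≤ y → y < 1 → (1 - y) * f' y = γ * f y := by
    intro y hy0 hy1
    have hyabs : |y| < 1 := by rwa [abs_of_nonneg hy0]
    have hsum : Summable (fun n : ℕ => P n * y ^ n / n.factorial) := summable_binom hγ0 hγ1 hyabs
    have h1 : HasSum (fun n : ℕ => P n * y ^ n / n.factorial) (f y) := hsum.hasSum
    have hDsum : Summable (fun n : ℕ => (P n / n.factorial) * ((n : ℝ) * y ^ (n - 1))) := by
      apply Summable.of_norm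
      refine Summable.of_nonneg_of_le (fun n => norm_nonneg _) (fun n => ?_)
        (summable_deriv_aux (abs_nonneg y) hyabs)
      have hp := poch_pos hγ0 n
      have hfa : (0:ℝ) < n.factorial := by positivity
      rw [Real.norm_eq_abs, abs_mul, abs_mul, abs_div, abs_of_pos hp, abs_of_pos hfa,
        Nat.abs_cast, abs_pow]
      have hq : P n / n.factorial ≤ 1 := by
        rw [div_le_one hfa]; exact poch_le_factorial hγ1.le hγ0 n
      calc P n / n.factorial * ((n:ℝ) * |y| ^ (n-1)) ≤ 1 * ((n:ℝ) * |y| ^ (n-1)) :=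
            mul_le_mul_of_nonneg_right hq (by positivity)
        _ = (n:ℝ) * |y| ^ (n-1) := one_mul _
    have hD : HasSum (fun n : ℕ => (P n / n.factorial) * ((n : ℝ) * y ^ (n - 1))) (f' y) :=
      hDsum.hasSum
    have hD' : HasSum (fun n : ℕ => P n * (γ + n) * y ^ n / n.factorial) (f' y) := by
      have h2 := (hasSum_nat_add_iff'
        (f := fun n : ℕ => (P n / n.factorial) * ((n : ℝ) * y ^ (n - 1))) 1).2 hD
      simp only [Finset.range_one, Finset.sum_singleton, Nat.cast_zero, zero_mul, mul_zero,
        sub_zero] at h2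
      refine hasSum_congr' (fun n => ?_) h2
      simp only [hP]
      rw [ascPochhammer_succ_eval, Nat.factorial_succ, Nat.add_sub_cancel]
      have hn1 : ((n:ℝ) + 1) ≠ 0 := by positivity
      have hfa : ((n.factorial : ℝ)) ≠ 0 := by positivity
      push_cast
      field_simp
    have hyD : HasSum (fun n : ℕ => (n : ℝ) * P n * y ^ n / n.factorial) (y * f' y) := by
      set F : ℕ → ℝ := fun m => (m : ℝ) * P m * y ^ m / m.factorial with hF
      have h3 : HasSum (fun n : ℕ => F (n + 1)) (y * f' y) := by
        refine hasSum_congr' (fun n => ?_) (hD'.mul_left y)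
        simp only [hF, hP]
        rw [ascPochhammer_succ_eval, Nat.factorial_succ]
        have hn1 : ((n:ℝ) + 1) ≠ 0 := by positivity
        have hfa : ((n.factorial : ℝ)) ≠ 0 := by positivity
        push_cast
        field_simp
        ring
      have h4 := (hasSum_nat_add_iff (f := F) 1).1 h3
      simp only [Finset.range_one, Finset.sum_singleton, hF, Nat.cast_zero, zero_mul,
        Nat.factorial_zero, Nat.cast_one, zero_div, add_zero] at h4
      exact h4
    have hcomb : HasSum (fun n : ℕ => P n * (γ + n) * y ^ n / n.factorial)
        (γ * f y + y * f' y) := by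
      refine hasSum_congr' (fun n => ?_) ((h1.mul_left γ).add hyD)
      ring
    have heq : f' y = γ * f y + y * f' y := hD'.unique hcomb
    linear_combination heq
  -- constancy of g = (1-x)^γ * f x
  have hgw : ∀ w : ℝ, 0 ≤ w → w < 1 → HasDerivAt (fun u => (1 - u) ^ γ * f u) 0 w := by
    intro w h0 h1
    have hw1 : (0:ℝ) < 1 - w := by linarith
    have hpow : HasDerivAt (fun u : ℝ => (1 - u) ^ γ) (-(γ * (1 - w) ^ (γ - 1))) w := by
      have h := Real.hasDerivAt_rpow_const (x := 1 - w) (p := γ) (Or.inl (ne_of_gt hw1))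
      have hc : HasDerivAt (fun u : ℝ => 1 - u) (-1) w := (hasDerivAt_id w).const_sub 1
      have h2 := h.comp w hc
      simpa [Function.comp_def] using h2
    have hfd := hderiv w ⟨by linarith, h1⟩
    have h3 := hpow.mul hfd
    have hkey := key w h0 h1
    have hsplit : (1 - w) ^ γ = (1 - w) ^ (γ - 1) * (1 - w) := by
      rw [← Real.rpow_add_one (ne_of_gt hw1) (γ - 1)]
      norm_num
    refine h3.congr_deriv ?_
    rw [hsplit]
    linear_combination ((1 - w) ^ (γ - 1)) * hkey
  have hcst := constant_of_has_deriv_right_zero (f := fun u => (1 - u) ^ γ * f u)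
    (a := 0) (b := x)
    (fun w hw => ((hgw w hw.1 (lt_of_le_of_lt hw.2 hx1)).continuousAt).continuousWithinAt)
    (fun w hw => (hgw w hw.1 (lt_of_le_of_lt hw.2.le hx1)).hasDerivWithinAt)
    x ⟨hx0, le_refl x⟩
  have hf0 : f 0 = 1 := by
    have h5 : f 0 = ∑' n : ℕ, P n * (0:ℝ) ^ n / n.factorial := rfl
    rw [h5, tsum_eq_single 0 (by intro n hn; simp [zero_pow hn])]
    simp [hP]
  simp only [sub_zero, Real.one_rpow, hf0, mul_one] at hcst
  have hxpos : (0:ℝ) < 1 - x := by linarith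
  have hne : (1 - x) ^ γ ≠ 0 := ne_of_gt (Real.rpow_pos_of_pos hxpos γ)
  show f x = (1 - x) ^ (-γ)
  rw [Real.rpow_neg hxpos.le]
  field_simp
  linear_combination hcst

private lemma beta_integrable {γ : ℝ} (hγ0 : 0 < γ) (hγ1 : γ < 1) :
    IntervalIntegrable (fun u : ℝ => u ^ γ * (1 - u) ^ (-γ)) volume 0 1 := by
  have hc := Complex.betaIntegral_convergent (u := (1:ℂ) + γ) (v := (1:ℂ) - γ)
    (by simp; linarith) (by simp [Complex.sub_re]; linarith)
  constructor
  · have h1 : IntegrableOn (fun x : ℝ => ((x:ℂ) ^ ((1:ℂ) + γ - 1) * ((1:ℂ) - x) ^ ((1:ℂ) - γ - 1)).re)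
        (Ioc (0:ℝ) 1) volume := hc.1.re
    refine h1.congr_fun (fun x hx => ?_) measurableSet_Ioc
    have hx0 : (0:ℝ) ≤ x := hx.1.le
    have hx1 : (0:ℝ) ≤ 1 - x := by linarith [hx.2]
    have e1 : ((1:ℂ) + γ - 1) = ((γ : ℝ) : ℂ) := by push_cast; ring
    have e2 : ((1:ℂ) - γ - 1) = ((-γ : ℝ) : ℂ) := by push_cast; ring
    beta_reduce; rw [e1, e2, ← Complex.ofReal_cpow hx0, ← Complex.ofReal_one, ← Complex.ofReal_sub,
      ← Complex.ofReal_cpow hx1, ← Complex.ofReal_mul]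
    simp
  · simp [Ioc_eq_empty_of_le, integrableOn_empty]

private lemma beta_value {γ : ℝ} (hγ0 : 0 < γ) (hγ1 : γ < 1) :
    (∫ u in (0:ℝ)..1, u ^ γ * (1 - u) ^ (-γ)) = γ * π / Real.sin (π * γ) := by
  have hG := Complex.Gamma_mul_Gamma_eq_betaIntegral (s := (1:ℂ) + γ) (t := (1:ℂ) - γ)
    (by simp; linarith) (by simp [Complex.sub_re]; linarith)
  have hB : Complex.betaIntegral ((1:ℂ) + γ) ((1:ℂ) - γ)
      = ((∫ u in (0:ℝ)..1, u ^ γ * (1 - u) ^ (-γ) : ℝ) : ℂ) := by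
    rw [Complex.betaIntegral, ← intervalIntegral.integral_ofReal]
    refine intervalIntegral.integral_congr (fun x hx => ?_)
    rw [uIcc_of_le (by norm_num : (0:ℝ) ≤ 1)] at hx
    have hx0 : (0:ℝ) ≤ x := hx.1
    have hx1 : (0:ℝ) ≤ 1 - x := by linarith [hx.2]
    have e1 : ((1:ℂ) + γ - 1) = ((γ : ℝ) : ℂ) := by push_cast; ring
    have e2 : ((1:ℂ) - γ - 1) = ((-γ : ℝ) : ℂ) := by push_cast; ring
    rw [e1, e2, ← Complex.ofReal_cpow hx0, ← Complex.ofReal_one, ← Complex.ofReal_sub,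
      ← Complex.ofReal_cpow hx1, ← Complex.ofReal_mul]
  have h2 : ((1:ℂ) + γ + ((1:ℂ) - γ)) = 2 := by ring
  rw [h2] at hG
  have hΓ2 : Complex.Gamma 2 = 1 := by
    have := Complex.Gamma_nat_eq_factorial 1
    norm_num at this
    simpa using this
  rw [hΓ2, one_mul, hB] at hG
  -- convert Gammas to real
  have hre : ((1:ℂ) + γ) = ((1 + γ : ℝ) : ℂ) := by push_cast; ring
  have hre2 : ((1:ℂ) - γ) = ((1 - γ : ℝ) : ℂ) := by push_cast; ring
  rw [hre, hre2, Complex.Gamma_ofReal, Complex.Gamma_ofReal, ← Complex.ofReal_mul] at hG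
  have hreal : Real.Gamma (1 + γ) * Real.Gamma (1 - γ)
      = ∫ u in (0:ℝ)..1, u ^ γ * (1 - u) ^ (-γ) := by
    exact_mod_cast hG
  rw [add_comm (1:ℝ) γ] at hreal
  rw [Real.Gamma_add_one (ne_of_gt hγ0)] at hreal
  rw [mul_assoc, Real.Gamma_mul_Gamma_one_sub] at hreal
  rw [← hreal, mul_div_assoc]

private lemma incomplete_beta {γ : ℝ} (hγ0 : 0 < γ) (hγ1 : γ < 1) {z : ℝ}
    (hz : z ∈ Ioo (0:ℝ) 1) :
    (∫ u in (0:ℝ)..z, u ^ γ * (1 - u) ^ (-γ))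
      = ∑' n : ℕ, (ascPochhammer ℝ n).eval γ * z ^ ((n:ℝ) + 1 + γ)
          / (((n:ℝ) + 1 + γ) * n.factorial) := by
  obtain ⟨hz0, hz1⟩ := hz
  set F : ℕ → ℝ → ℝ := fun n u => (ascPochhammer ℝ n).eval γ / n.factorial * u ^ ((n:ℝ) + γ)
    with hF
  have hcont : ∀ n : ℕ, Continuous (fun u : ℝ => u ^ ((n:ℝ) + γ)) := by
    intro n
    exact continuous_iff_continuousAt.mpr fun x =>
      Real.continuousAt_rpow_const x _ (Or.inr (by positivity))
  have hInt : ∀ n : ℕ, Integrable (F n) (volume.restrict (Ioo 0 z)) := by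
    intro n
    exact ((continuous_const.mul (hcont n)).integrableOn_Icc (a := 0) (b := z)).mono_set
      Ioo_subset_Icc_self
  have hval : ∀ n : ℕ, (∫ u in Ioo (0:ℝ) z, F n u)
      = (ascPochhammer ℝ n).eval γ / n.factorial * (z ^ ((n:ℝ) + γ + 1) / ((n:ℝ) + γ + 1)) := by
    intro n
    rw [← integral_Ioc_eq_integral_Ioo, ← intervalIntegral.integral_of_le hz0.le]
    simp only [hF]
    rw [intervalIntegral.integral_const_mul]
    rw [integral_rpow (Or.inl (by
      have := (Nat.cast_nonneg n : (0:ℝ) ≤ n); linarith : (-1:ℝ) < (n:ℝ) + γ))]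
    rw [Real.zero_rpow (by positivity : ((n:ℝ) + γ + 1) ≠ 0)]
    ring_nf
  have hnonneg : ∀ n : ℕ, ∀ u ∈ Ioo (0:ℝ) z, 0 ≤ F n u := by
    intro n u hu
    have := poch_pos hγ0 n
    have : (0:ℝ) < u ^ ((n:ℝ) + γ) := Real.rpow_pos_of_pos hu.1 _
    positivity
  have hNorm : Summable fun n : ℕ => ∫ u in Ioo (0:ℝ) z, ‖F n u‖ := by
    have heq : ∀ n : ℕ, (∫ u in Ioo (0:ℝ) z, ‖F n u‖) = ∫ u in Ioo (0:ℝ) z, F n u := by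
      intro n
      refine setIntegral_congr_fun measurableSet_Ioo fun u hu => ?_
      exact Real.norm_of_nonneg (hnonneg n u hu)
    simp_rw [heq, hval]
    refine Summable.of_nonneg_of_le (fun n => ?_) (fun n => ?_)
      ((summable_geometric_of_lt_one hz0.le hz1).mul_left (z ^ (γ + 1)))
    · have h1 := (poch_pos hγ0 n).le
      have h2 : (0:ℝ) ≤ z ^ ((n:ℝ) + γ + 1) := (Real.rpow_pos_of_pos hz0 _).le
      positivity
    · have hfa : (0:ℝ) < n.factorial := by positivity
      have hc : (ascPochhammer ℝ n).eval γ / n.factorial ≤ 1 := by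
        rw [div_le_one hfa]; exact poch_le_factorial hγ1.le hγ0 n
      have hc0 : (0:ℝ) ≤ (ascPochhammer ℝ n).eval γ / n.factorial :=
        div_nonneg (poch_pos hγ0 n).le hfa.le
      have hzp : z ^ ((n:ℝ) + γ + 1) = z ^ (γ + 1) * z ^ n := by
        rw [← Real.rpow_natCast z n, ← Real.rpow_add hz0]
        ring_nf
      have hd : z ^ ((n:ℝ) + γ + 1) / ((n:ℝ) + γ + 1) ≤ z ^ (γ + 1) * z ^ n := by
        rw [hzp]
        have hge : (1:ℝ) ≤ (n:ℝ) + γ + 1 := by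
          have := (Nat.cast_nonneg n : (0:ℝ) ≤ n); linarith
        have hnum : (0:ℝ) ≤ z ^ (γ + 1) * z ^ n := by positivity
        calc z ^ (γ + 1) * z ^ n / ((n:ℝ) + γ + 1) ≤ z ^ (γ + 1) * z ^ n / 1 :=
              div_le_div_of_nonneg_left hnum (by norm_num) hge
          _ = z ^ (γ + 1) * z ^ n := by rw [div_one]
      calc (ascPochhammer ℝ n).eval γ / n.factorial * (z ^ ((n:ℝ) + γ + 1) / ((n:ℝ) + γ + 1))
            ≤ 1 * (z ^ (γ + 1) * z ^ n) := by
            apply mul_le_mul hc hd _ zero_le_one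
            positivity
        _ = z ^ (γ + 1) * z ^ n := one_mul _
  have hsum_eq : (∫ u in (0:ℝ)..z, u ^ γ * (1 - u) ^ (-γ))
      = ∫ u in Ioo (0:ℝ) z, ∑' n : ℕ, F n u := by
    rw [intervalIntegral.integral_of_le hz0.le, integral_Ioc_eq_integral_Ioo]
    refine setIntegral_congr_fun measurableSet_Ioo fun u hu => ?_
    have hu0 : 0 < u := hu.1
    have hu1 : u < 1 := lt_trans hu.2 hz1
    rw [← binom_tsum hγ0 hγ1 hu0.le hu1, ← tsum_mul_left]
    refine tsum_congr fun n => ?_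
    simp only [hF]
    rw [Real.rpow_add hu0, Real.rpow_natCast]
    ring
  rw [hsum_eq, ← MeasureTheory.integral_tsum_of_summable_integral_norm hInt hNorm]
  refine tsum_congr fun n => ?_
  rw [hval]
  have h1 : ((n:ℝ) + γ + 1) ≠ 0 := by positivity
  have hfa : ((n.factorial:ℝ)) ≠ 0 := by positivity
  have h2 : ((n:ℝ) + 1 + γ) = ((n:ℝ) + γ + 1) := by ring
  rw [h2, div_mul_div_comm, mul_comm ((n.factorial:ℝ)) ((n:ℝ) + γ + 1)]

/-- The Gauss hypergeometric function `₂F₁(a, b; c; z)` as a power series sum. -/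
noncomputable def hyp2F1 (a b c z : ℝ) : ℝ :=
  ∑' n : ℕ, ((ascPochhammer ℝ n).eval a * (ascPochhammer ℝ n).eval b /
    (ascPochhammer ℝ n).eval c) * z ^ n / (n.factorial : ℝ)

private lemma poch_shift {γ : ℝ} (n : ℕ) :
    (ascPochhammer ℝ n).eval (1 + γ) * (1 + γ + n) = (1 + γ) * (ascPochhammer ℝ n).eval (2 + γ) := by
  have h1 := ascPochhammer_succ_eval n (1 + γ)
  have h2 : (ascPochhammer ℝ (n + 1)).eval (1 + γ)
      = (1 + γ) * (ascPochhammer ℝ n).eval (2 + γ) := by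
    rw [ascPochhammer_succ_left, Polynomial.eval_mul, Polynomial.eval_X, Polynomial.eval_comp,
      Polynomial.eval_add, Polynomial.eval_X, Polynomial.eval_one]
    have h3 : (1:ℝ) + γ + 1 = 2 + γ := by ring
    rw [h3]
  rw [h1] at h2
  linarith [h2]

private lemma hyp_eq {γ : ℝ} (hγ0 : 0 < γ) (z : ℝ) :
    hyp2F1 (1 + γ) γ (2 + γ) z
      = (1 + γ) * ∑' n : ℕ, (ascPochhammer ℝ n).eval γ * z ^ n
          / (((n:ℝ) + 1 + γ) * n.factorial) := by
  rw [hyp2F1, ← tsum_mul_left]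
  refine tsum_congr fun n => ?_
  have hC : (0:ℝ) < (ascPochhammer ℝ n).eval (2 + γ) := poch_pos (by linarith) n
  have hq : ((1:ℝ) + γ + n) ≠ 0 := by positivity
  have hA : (ascPochhammer ℝ n).eval (1 + γ)
      = (1 + γ) * (ascPochhammer ℝ n).eval (2 + γ) / (1 + γ + n) := by
    rw [eq_div_iff hq]
    exact poch_shift n
  rw [hA]
  have hfa : ((n.factorial:ℝ)) ≠ 0 := by positivity
  have hq2 : ((n:ℝ) + 1 + γ) ≠ 0 := by positivity
  field_simp
  ring

/-- Closed form of `W(y, t, t_c) = ∫_{t_c}^t (τ - y)^γ (t - τ)^(-γ) dτ` for `y < t_c < t`. -/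
theorem W_closed_form (γ y t_c t : ℝ) (hγ : γ ∈ Set.Ioo (0:ℝ) 1)
    (hy : y < t_c) (ht : t_c < t) :
    (∫ τ in t_c..t, (τ - y) ^ γ * (t - τ) ^ (-γ))
      = γ * π * (Real.sin (π * γ))⁻¹ * (t - y)
        - (1 / (1 + γ)) * (t_c - y) ^ (1 + γ) * (t - y) ^ (-γ) *
          hyp2F1 (1 + γ) γ (2 + γ) ((t_c - y) / (t - y)) := by
  obtain ⟨hγ0, hγ1⟩ := hγ
  have hA : (0:ℝ) < t - y := by linarith
  have htc : (0:ℝ) < t_c - y := by linarith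
  set z : ℝ := (t_c - y) / (t - y) with hzdef
  have hz0 : 0 < z := div_pos htc hA
  have hz1 : z < 1 := (div_lt_one hA).mpr (by linarith)
  have htz : t_c - y = (t - y) * z := by rw [hzdef]; field_simp
  -- Step 1: reduce to the normalized integral
  have step1 : (∫ τ in t_c..t, (τ - y) ^ γ * (t - τ) ^ (-γ))
      = (t - y) * ∫ v in z..1, v ^ γ * (1 - v) ^ (-γ) := by
    have e1 : (∫ τ in t_c..t, (τ - y) ^ γ * (t - τ) ^ (-γ))
        = ∫ u in (t_c - y)..(t - y), u ^ γ * ((t - y) - u) ^ (-γ) := by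
      rw [← intervalIntegral.integral_comp_sub_right
        (fun u => u ^ γ * ((t - y) - u) ^ (-γ)) y]
      refine intervalIntegral.integral_congr fun τ _ => ?_
      have h : (t - y) - (τ - y) = t - τ := by ring
      rw [h]
    have e2 := intervalIntegral.smul_integral_comp_mul_left (a := z) (b := 1)
      (fun u => u ^ γ * ((t - y) - u) ^ (-γ)) (t - y)
    rw [mul_one, ← htz] at e2
    have e3 : (∫ v in z..1, (fun u => u ^ γ * ((t - y) - u) ^ (-γ)) ((t - y) * v))
        = ∫ v in z..1, v ^ γ * (1 - v) ^ (-γ) := by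
      refine intervalIntegral.integral_congr fun v hv => ?_
      rw [uIcc_of_le hz1.le] at hv
      have hv0 : (0:ℝ) ≤ v := le_trans hz0.le hv.1
      have hv1 : (0:ℝ) ≤ 1 - v := by linarith [hv.2]
      show ((t - y) * v) ^ γ * ((t - y) - (t - y) * v) ^ (-γ) = v ^ γ * (1 - v) ^ (-γ)
      have h : (t - y) - (t - y) * v = (t - y) * (1 - v) := by ring
      rw [h, Real.mul_rpow hA.le hv0, Real.mul_rpow hA.le hv1]
      have h2 : ((t - y) ^ γ * v ^ γ) * ((t - y) ^ (-γ) * (1 - v) ^ (-γ))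
          = ((t - y) ^ γ * (t - y) ^ (-γ)) * (v ^ γ * (1 - v) ^ (-γ)) := by ring
      rw [h2, ← Real.rpow_add hA, add_neg_cancel, Real.rpow_zero, one_mul]
    rw [e1, ← e2, e3, smul_eq_mul]
  -- Step 2: split the integral
  have hsub1 : uIcc (0:ℝ) z ⊆ uIcc (0:ℝ) 1 := by
    rw [uIcc_of_le hz0.le, uIcc_of_le (by norm_num : (0:ℝ) ≤ 1)]
    exact Icc_subset_Icc le_rfl hz1.le
  have hsub2 : uIcc z (1:ℝ) ⊆ uIcc (0:ℝ) 1 := by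
    rw [uIcc_of_le hz1.le, uIcc_of_le (by norm_num : (0:ℝ) ≤ 1)]
    exact Icc_subset_Icc hz0.le le_rfl
  have hi1 := (beta_integrable hγ0 hγ1).mono_set hsub1
  have hi2 := (beta_integrable hγ0 hγ1).mono_set hsub2
  have hsplit := intervalIntegral.integral_add_adjacent_intervals hi1 hi2
  have step2 : (∫ v in z..1, v ^ γ * (1 - v) ^ (-γ))
      = (∫ v in (0:ℝ)..1, v ^ γ * (1 - v) ^ (-γ))
        - ∫ v in (0:ℝ)..z, v ^ γ * (1 - v) ^ (-γ) := by linarith [hsplit]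
  rw [step1, step2, beta_value hγ0 hγ1, incomplete_beta hγ0 hγ1 ⟨hz0, hz1⟩]
  -- identify the hypergeometric part
  have hF : (∑' n : ℕ, (ascPochhammer ℝ n).eval γ * z ^ ((n:ℝ) + 1 + γ)
        / (((n:ℝ) + 1 + γ) * n.factorial))
      = z ^ (1 + γ) * ∑' n : ℕ, (ascPochhammer ℝ n).eval γ * z ^ n
          / (((n:ℝ) + 1 + γ) * n.factorial) := by
    rw [← tsum_mul_left]
    refine tsum_congr fun n => ?_
    have h : z ^ ((n:ℝ) + 1 + γ) = z ^ (1 + γ) * z ^ n := by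
      rw [← Real.rpow_natCast z n, ← Real.rpow_add hz0]
      ring_nf
    rw [h]
    ring
  have hpow : (t_c - y) ^ (1 + γ) * (t - y) ^ (-γ) = (t - y) * z ^ (1 + γ) := by
    rw [htz, Real.mul_rpow hA.le hz0.le]
    have h : (t - y) ^ (1 + γ) * z ^ (1 + γ) * (t - y) ^ (-γ)
        = ((t - y) ^ (1 + γ) * (t - y) ^ (-γ)) * z ^ (1 + γ) := by ring
    rw [h, ← Real.rpow_add hA]
    norm_num
  rw [hF, hyp_eq hγ0]
  have e4 : (t - y) ^ ((1:ℝ) + γ) = (t - y) * (t - y) ^ γ := by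
    rw [Real.rpow_add hA, Real.rpow_one]
  have e5 : (t - y) ^ (-γ) = ((t - y) ^ γ)⁻¹ := Real.rpow_neg hA.le γ
  rw [htz, Real.mul_rpow hA.le hz0.le, e4, e5]
  have hne : (t - y) ^ γ ≠ 0 := ne_of_gt (Real.rpow_pos_of_pos hA γ)
  have h1γ : (1:ℝ) + γ ≠ 0 := by positivity
  have hsin : Real.sin (π * γ) ≠ 0 := by
    refine ne_of_gt (Real.sin_pos_of_pos_of_lt_pi ?_ ?_)
    · positivity
    · nlinarith [Real.pi_pos]
  field_simp
end

section
/- Let 0 < γ < 1 and let s : [0, t_c] → ℝ be continuous with ∫₀^{t_c} s(τ)(t_c−τ)^{γ−1} dτ = 1/γ (so f(t_c) = 0 where f(t) := 1/γ − ∫₀^{t_c} s(τ)(t−τ)^{γ−1} dτ). If s is piecewise linear on a partition 0 = t₀ < t₁ < ... < t_k = t_c, then the solution g of the Abel equation ∫_{t_c}^{t} g(τ)(t−τ)^{γ−1} dτ = f(t) given by the inversion formula satisfies lim_{t→t_c⁺} g(t) = s(t_c). -/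
open MeasureTheory Set Real Filter

lemma cz_beta_aux {γ : ℝ} (h0 : 0 < γ) (h1 : γ < 1) :
    ∫ x in (0:ℝ)..1, x ^ (γ - 1) * (1 - x) ^ (-γ) = π / Real.sin (π * γ) := by
  have h2 : (0:ℝ) < 1 - γ := by linarith
  have key := Complex.Gamma_mul_Gamma_eq_betaIntegral (s := (γ:ℂ)) (t := ((1-γ:ℝ):ℂ))
    (by simpa using h0) (by simpa using h2)
  have h3 : (γ:ℂ) + ((1-γ:ℝ):ℂ) = 1 := by push_cast; ring
  rw [h3, Complex.Gamma_one, one_mul] at key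
  have h4 : Complex.betaIntegral (γ:ℂ) ((1-γ:ℝ):ℂ)
      = ((∫ x in (0:ℝ)..1, x ^ (γ - 1) * (1 - x) ^ (-γ) : ℝ) : ℂ) := by
    rw [Complex.betaIntegral, ← intervalIntegral.integral_ofReal]
    apply intervalIntegral.integral_congr
    intro x hx
    rw [uIcc_of_le (by norm_num : (0:ℝ) ≤ 1)] at hx
    push_cast
    rw [Complex.ofReal_cpow hx.1, Complex.ofReal_cpow (by linarith [hx.2] : (0:ℝ) ≤ 1 - x)]
    push_cast
    ring_nf
  rw [h4, Complex.Gamma_ofReal, Complex.Gamma_ofReal, ← Complex.ofReal_mul] at key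
  have := Real.Gamma_mul_Gamma_one_sub γ
  rw [this] at key
  exact_mod_cast key.symm

lemma cz_beta_shift {γ a b : ℝ} (h0 : 0 < γ) (h1 : γ < 1) (hab : a < b) :
    ∫ u in a..b, (u - a) ^ (γ - 1) * (b - u) ^ (-γ) = π / Real.sin (π * γ) := by
  have hε : (0:ℝ) < b - a := by linarith
  have key := intervalIntegral.integral_comp_mul_add
    (f := fun u => (u - a) ^ (γ - 1) * (b - u) ^ (-γ)) (a := (0:ℝ)) (b := 1)
    (c := b - a) (ne_of_gt hε) a
  simp only [mul_zero, zero_add, mul_one, sub_add_cancel] at key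
  have h5 : (∫ x in (0:ℝ)..1, ((b-a) * x + a - a) ^ (γ - 1) * (b - ((b-a) * x + a)) ^ (-γ))
      = (b-a)⁻¹ * (π / Real.sin (π * γ)) := by
    rw [← cz_beta_aux h0 h1, ← intervalIntegral.integral_const_mul]
    apply intervalIntegral.integral_congr
    intro x hx
    rw [uIcc_of_le (by norm_num : (0:ℝ) ≤ 1)] at hx
    dsimp only
    have hx0 : 0 ≤ x := hx.1
    have hx1 : 0 ≤ 1 - x := by linarith [hx.2]
    have e1 : (b-a) * x + a - a = (b-a) * x := by ring
    have e2 : b - ((b-a) * x + a) = (b-a) * (1-x) := by ring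
    rw [e1, e2, Real.mul_rpow hε.le hx0, Real.mul_rpow hε.le hx1]
    have e3 : (b-a) ^ (γ-1) * ((b-a) ^ (-γ)) = (b-a)⁻¹ := by
      rw [← Real.rpow_add hε, show γ-1+-γ = (-1:ℝ) by ring, Real.rpow_neg_one]
    calc (b-a) ^ (γ-1) * x ^ (γ-1) * ((b-a) ^ (-γ) * (1-x) ^ (-γ))
        = ((b-a) ^ (γ-1) * ((b-a) ^ (-γ))) * (x ^ (γ-1) * (1-x) ^ (-γ)) := by ring
      _ = (b-a)⁻¹ * (x ^ (γ-1) * (1-x) ^ (-γ)) := by rw [e3]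
  rw [h5, smul_eq_mul] at key
  have := mul_left_cancel₀ (inv_ne_zero (ne_of_gt hε)) key
  exact this.symm

lemma cz_beta_integrable {γ a b : ℝ} (h0 : 0 < γ) (h1 : γ < 1) (hab : a < b) :
    IntervalIntegrable (fun u => (u - a) ^ (γ - 1) * (b - u) ^ (-γ)) volume a b := by
  set m := (a + b) / 2 with hm
  have ham : a < m := by simp only [hm]; linarith
  have hmb : m < b := by simp only [hm]; linarith
  have part1 : IntervalIntegrable (fun u => (u - a) ^ (γ - 1) * (b - u) ^ (-γ)) volume a m := by
    have base : IntervalIntegrable (fun x : ℝ => x ^ (γ - 1)) volume 0 (m - a) :=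
      intervalIntegral.intervalIntegrable_rpow' (by linarith)
    have shifted := base.comp_sub_right a
    simp only [zero_add, sub_add_cancel] at shifted
    apply shifted.mul_continuousOn
    apply ContinuousOn.rpow_const (continuous_const.sub continuous_id).continuousOn
    intro x hx
    rw [uIcc_of_le ham.le] at hx
    left
    have : x ≤ m := hx.2
    intro h
    simp only [Pi.sub_apply, id_eq] at h
    linarith
  have part2 : IntervalIntegrable (fun u => (u - a) ^ (γ - 1) * (b - u) ^ (-γ)) volume m b := by
    have base : IntervalIntegrable (fun x : ℝ => x ^ (-γ)) volume (b - m) 0 :=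
      intervalIntegral.intervalIntegrable_rpow' (by linarith)
    have shifted := base.comp_sub_left b
    simp only [sub_sub_cancel, sub_zero] at shifted
    apply shifted.continuousOn_mul
    apply ContinuousOn.rpow_const (continuous_id.sub continuous_const).continuousOn
    intro x hx
    rw [uIcc_of_le hmb.le] at hx
    left
    have : m ≤ x := hx.1
    intro h
    simp only [Pi.sub_apply, id_eq] at h
    linarith
  exact part1.trans part2

lemma cz_hasDerivAt_tau {γ t c : ℝ} (h : c < t) (hγ0 : 0 < γ) (Aj Bj : ℝ) :
    HasDerivAt (fun τ : ℝ => -(Aj * t + Bj) * (t - τ) ^ γ / γ + Aj * (t - τ) ^ (γ+1) / (γ+1))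
      ((Aj * c + Bj) * (t - c) ^ (γ - 1)) c := by
  have hpos : 0 < t - c := by linarith
  have d1 : HasDerivAt (fun τ : ℝ => t - τ) (-1) c := by
    simpa using (hasDerivAt_id c).const_sub t
  have d2 : HasDerivAt (fun τ : ℝ => (t - τ) ^ γ) (γ * (t - c) ^ (γ-1) * (-1)) c :=
    (Real.hasDerivAt_rpow_const (Or.inl hpos.ne')).comp c d1
  have d3 : HasDerivAt (fun τ : ℝ => (t - τ) ^ (γ+1)) ((γ+1) * (t - c) ^ (γ+1-1) * (-1)) c :=
    (Real.hasDerivAt_rpow_const (p := γ+1) (Or.inl hpos.ne')).comp c d1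
  have d4 := ((d2.const_mul (-(Aj*t+Bj))).div_const γ).add ((d3.const_mul Aj).div_const (γ+1))
  refine d4.congr_deriv ?_
  have e : (t - c) ^ (γ+1-1) = (t-c) ^ γ := by norm_num
  have e2 : (t - c) ^ γ = (t - c) * (t - c) ^ (γ - 1) := by
    calc (t-c) ^ γ = (t-c) ^ (1 + (γ-1)) := by norm_num
      _ = (t-c) ^ (1:ℝ) * (t-c) ^ (γ-1) := Real.rpow_add hpos 1 (γ-1)
      _ = (t - c) * (t - c) ^ (γ - 1) := by rw [Real.rpow_one]
  rw [e, e2]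
  field_simp
  ring

lemma cz_hasDerivAt_t {γ u c : ℝ} (h : c < u) (hγ0 : 0 < γ) (Aj Bj : ℝ) :
    HasDerivAt (fun t : ℝ => -(Aj * t + Bj) * (t - c) ^ γ / γ + Aj * (t - c) ^ (γ+1) / (γ+1))
      (-((Aj * c + Bj) * (u - c) ^ (γ - 1)) - (Aj/γ) * (u - c) ^ γ) u := by
  have hpos : 0 < u - c := by linarith
  have d1 : HasDerivAt (fun t : ℝ => t - c) 1 u := (hasDerivAt_id u).sub_const c
  have d2 : HasDerivAt (fun t : ℝ => (t - c) ^ γ) (γ * (u - c) ^ (γ-1) * 1) u :=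
    by have := (Real.hasDerivAt_rpow_const (x := u - c) (p := γ) (Or.inl hpos.ne')).comp u d1; exact this
  have d3 : HasDerivAt (fun t : ℝ => (t - c) ^ (γ+1)) ((γ+1) * (u - c) ^ (γ+1-1) * 1) u :=
    by have := (Real.hasDerivAt_rpow_const (x := u - c) (p := γ+1) (Or.inl hpos.ne')).comp u d1; exact this
  have lin : HasDerivAt (fun t : ℝ => -(Aj * t + Bj)) (-Aj) u := by
    exact ((((hasDerivAt_id u).const_mul Aj).add_const Bj).neg).congr_deriv (by simp)
  have d4 := ((lin.mul d2).div_const γ).add ((d3.const_mul Aj).div_const (γ+1))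
  refine d4.congr_deriv ?_
  have e : (u - c) ^ (γ+1-1) = (u-c) ^ γ := by norm_num
  have e2 : (u - c) ^ γ = (u - c) * (u - c) ^ (γ - 1) := by
    calc (u-c) ^ γ = (u-c) ^ (1 + (γ-1)) := by norm_num
      _ = (u-c) ^ (1:ℝ) * (u-c) ^ (γ-1) := Real.rpow_add hpos 1 (γ-1)
      _ = (u - c) * (u - c) ^ (γ - 1) := by rw [Real.rpow_one]
  rw [e, e2]
  field_simp
  ring

/-- The regular (bounded) part of the derivative of `f`. -/
noncomputable def czH (γ : ℝ) (k : ℕ) (tp A : ℕ → ℝ) (s0 u : ℝ) : ℝ :=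
  -s0 * u ^ (γ-1) + (1/γ) * ∑ j ∈ Finset.range k, A j * ((u - tp (j+1)) ^ γ - (u - tp j) ^ γ)


/-- Right-continuity of the cohesive-zone stress at the time `t_c` a point joins the CZ:
if the stress history `s` on `[0, t_c]` is continuous, piecewise linear on a partition
`0 = t₀ < t₁ < ... < t_k = t_c`, and satisfies `∫₀^{t_c} s(τ)(t_c−τ)^(γ−1) dτ = 1/γ`
(so that `f(t_c) = 0` for `f(t) := 1/γ − ∫₀^{t_c} s(τ)(t−τ)^(γ−1) dτ`), then the
Abel-inverted solution `g` given by the inversion formula tends to `s(t_c)` as `t → t_c⁺`. -/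
theorem cz_stress_right_continuous
    (γ t_c : ℝ) (hγ : γ ∈ Set.Ioo (0:ℝ) 1) (htc : 0 < t_c)
    (s : ℝ → ℝ) (hs : ContinuousOn s (Set.Icc 0 t_c))
    (k : ℕ) (hk : 0 < k) (tp : ℕ → ℝ) (htp0 : tp 0 = 0) (htpk : tp k = t_c)
    (htpmono : ∀ j < k, tp j < tp (j + 1))
    (hlin : ∀ j < k, ∃ A B : ℝ, ∀ τ ∈ Set.Icc (tp j) (tp (j + 1)), s τ = A * τ + B)
    (hcz : (∫ τ in (0:ℝ)..t_c, s τ * (t_c - τ) ^ (γ - 1)) = 1 / γ)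
    (f : ℝ → ℝ)
    (hf : ∀ t, f t = 1 / γ - ∫ τ in (0:ℝ)..t_c, s τ * (t - τ) ^ (γ - 1))
    (g : ℝ → ℝ)
    (hg : ∀ τ, t_c < τ →
      g τ = Real.sin (π * γ) / π *
        (f t_c * (τ - t_c) ^ (-γ) + ∫ u in t_c..τ, deriv f u * (τ - u) ^ (-γ))) :
    Filter.Tendsto g (nhdsWithin t_c (Set.Ioi t_c)) (nhds (s t_c)) := by
  obtain ⟨hγ0, hγ1⟩ := hγ
  have hπ : (0:ℝ) < π := Real.pi_pos
  have hsin : 0 < Real.sin (π * γ) :=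
    Real.sin_pos_of_pos_of_lt_pi (by positivity) (by nlinarith)
  -- coefficients
  have hlin' : ∀ j : ℕ, ∃ AB : ℝ × ℝ, j < k → ∀ τ ∈ Set.Icc (tp j) (tp (j+1)),
      s τ = AB.1 * τ + AB.2 := by
    intro j
    by_cases h : j < k
    · obtain ⟨A, B, hAB⟩ := hlin j h
      exact ⟨(A, B), fun _ => hAB⟩
    · exact ⟨(0, 0), fun hj => absurd hj h⟩
  choose AB hAB using hlin'
  set A : ℕ → ℝ := fun j => (AB j).1 with hA
  set B : ℕ → ℝ := fun j => (AB j).2 with hB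
  -- monotonicity facts
  have hmono : ∀ n, n ≤ k → ∀ i, i ≤ n → tp i ≤ tp n := by
    intro n
    induction n with
    | zero => intro _ i hi; rw [Nat.le_zero.mp hi]
    | succ n ih =>
      intro hn i hi
      rcases Nat.eq_or_lt_of_le hi with h | h
      · rw [h]
      · exact le_trans (ih (by omega) i (by omega)) (le_of_lt (htpmono n (by omega)))
  have htp_nonneg : ∀ j, j ≤ k → 0 ≤ tp j := by
    intro j hj; rw [← htp0]; exact hmono j hj 0 (Nat.zero_le _)
  have htp_le : ∀ j, j ≤ k → tp j ≤ t_c := by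
    intro j hj; rw [← htpk]; exact hmono k le_rfl j hj
  have htp_lt : ∀ j, j < k → tp j < t_c := by
    intro j hj
    have h2 : tp (j+1) ≤ t_c := htp_le (j+1) hj
    exact lt_of_lt_of_le (htpmono j hj) h2
  -- explicit formula for f on (t_c, ∞)
  have f_eq : ∀ t, t_c < t → f t = 1/γ - ∑ j ∈ Finset.range k,
      ((-(A j * t + B j) * (t - tp (j+1)) ^ γ / γ + A j * (t - tp (j+1)) ^ (γ+1) / (γ+1))
       - (-(A j * t + B j) * (t - tp j) ^ γ / γ + A j * (t - tp j) ^ (γ+1) / (γ+1))) := by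
    intro t ht
    rw [hf t]
    congr 1
    have hint : ∀ j < k, IntervalIntegrable (fun τ => s τ * (t - τ) ^ (γ-1))
        volume (tp j) (tp (j+1)) := by
      intro j hj
      apply ContinuousOn.intervalIntegrable
      rw [uIcc_of_le (htpmono j hj).le]
      apply ContinuousOn.mul
      · exact hs.mono (Icc_subset_Icc (htp_nonneg j hj.le) (htp_le (j+1) hj))
      · apply ContinuousOn.rpow_const (continuous_const.sub continuous_id).continuousOn
        intro x hx
        left
        have h1 : x ≤ t_c := le_trans hx.2 (htp_le (j+1) hj)
        have h2 : 0 < t - x := by linarith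
        exact ne_of_gt h2
    rw [show (0:ℝ) = tp 0 from htp0.symm, show t_c = tp k from htpk.symm,
      ← intervalIntegral.sum_integral_adjacent_intervals hint]
    apply Finset.sum_congr rfl
    intro j hj
    rw [Finset.mem_range] at hj
    have hderiv : ∀ τ ∈ uIcc (tp j) (tp (j+1)),
        HasDerivAt (fun c => -(A j * t + B j) * (t - c) ^ γ / γ + A j * (t - c) ^ (γ+1) / (γ+1))
          (s τ * (t - τ) ^ (γ-1)) τ := by
      intro τ hτ
      rw [uIcc_of_le (htpmono j hj).le] at hτ
      have hτt : τ < t := lt_of_le_of_lt (le_trans hτ.2 (htp_le (j+1) hj)) ht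
      have key := cz_hasDerivAt_tau hτt hγ0 (A j) (B j)
      rw [hAB j hj τ hτ]
      exact key
    rw [intervalIntegral.integral_eq_sub_of_hasDerivAt hderiv (hint j hj)]
  -- derivative of f on (t_c, ∞)
  have deriv_eq : ∀ u, t_c < u →
      deriv f u = s t_c * (u - t_c) ^ (γ-1) + czH γ k tp A (s 0) u := by
    intro u hu
    have hFd : HasDerivAt (fun t => 1/γ - ∑ j ∈ Finset.range k,
        ((-(A j * t + B j) * (t - tp (j+1)) ^ γ / γ + A j * (t - tp (j+1)) ^ (γ+1) / (γ+1))
         - (-(A j * t + B j) * (t - tp j) ^ γ / γ + A j * (t - tp j) ^ (γ+1) / (γ+1))))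
        (-(∑ j ∈ Finset.range k,
          ((-((A j * tp (j+1) + B j) * (u - tp (j+1)) ^ (γ-1)) - (A j/γ) * (u - tp (j+1)) ^ γ)
           - (-((A j * tp j + B j) * (u - tp j) ^ (γ-1)) - (A j/γ) * (u - tp j) ^ γ)))) u := by
      apply HasDerivAt.const_sub
      apply HasDerivAt.fun_sum
      intro j hj
      rw [Finset.mem_range] at hj
      exact (cz_hasDerivAt_t (lt_of_le_of_lt (htp_le (j+1) hj) hu) hγ0 (A j) (B j)).sub
        (cz_hasDerivAt_t (lt_trans (htp_lt j hj) hu) hγ0 (A j) (B j))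
    have hfF : f =ᶠ[nhds u] (fun t => 1/γ - ∑ j ∈ Finset.range k,
        ((-(A j * t + B j) * (t - tp (j+1)) ^ γ / γ + A j * (t - tp (j+1)) ^ (γ+1) / (γ+1))
         - (-(A j * t + B j) * (t - tp j) ^ γ / γ + A j * (t - tp j) ^ (γ+1) / (γ+1)))) := by
      filter_upwards [Ioi_mem_nhds hu] with t ht using f_eq t ht
    rw [hfF.deriv_eq, hFd.deriv]
    -- algebraic identification
    have e1 : ∀ j ∈ Finset.range k,
        ((-((A j * tp (j+1) + B j) * (u - tp (j+1)) ^ (γ-1)) - (A j/γ) * (u - tp (j+1)) ^ γ)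
         - (-((A j * tp j + B j) * (u - tp j) ^ (γ-1)) - (A j/γ) * (u - tp j) ^ γ))
        = -((s (tp (j+1)) * (u - tp (j+1)) ^ (γ-1)) - (s (tp j) * (u - tp j) ^ (γ-1)))
          - (1/γ) * (A j * ((u - tp (j+1)) ^ γ - (u - tp j) ^ γ)) := by
      intro j hj
      rw [Finset.mem_range] at hj
      have l1 : s (tp j) = A j * tp j + B j := hAB j hj (tp j) ⟨le_rfl, (htpmono j hj).le⟩
      have l2 : s (tp (j+1)) = A j * tp (j+1) + B j :=
        hAB j hj (tp (j+1)) ⟨(htpmono j hj).le, le_rfl⟩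
      rw [l1, l2]; ring
    rw [Finset.sum_congr rfl e1, Finset.sum_sub_distrib, Finset.sum_neg_distrib,
      Finset.sum_range_sub (fun j => s (tp j) * (u - tp j) ^ (γ-1)) k, ← Finset.mul_sum,
      htpk, htp0, sub_zero]
    unfold czH
    ring
  -- continuity and boundedness of czH
  have Hcont : ContinuousOn (czH γ k tp A (s 0)) (Icc t_c (t_c+1)) := by
    unfold czH
    apply ContinuousOn.add
    · apply ContinuousOn.mul continuousOn_const
      apply ContinuousOn.rpow_const continuous_id.continuousOn
      intro x hx
      exact Or.inl (ne_of_gt (lt_of_lt_of_le htc hx.1))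
    · apply ContinuousOn.mul continuousOn_const
      apply continuousOn_finset_sum
      intro j hj
      apply ContinuousOn.mul continuousOn_const
      apply ContinuousOn.sub
      · exact ContinuousOn.rpow_const ((continuous_id.sub continuous_const).continuousOn)
          (fun x hx => Or.inr hγ0.le)
      · exact ContinuousOn.rpow_const ((continuous_id.sub continuous_const).continuousOn)
          (fun x hx => Or.inr hγ0.le)
  obtain ⟨M, hM⟩ := (isCompact_Icc : IsCompact (Icc t_c (t_c+1))).exists_bound_of_continuousOn Hcont
  have hM0 : 0 ≤ M := le_trans (norm_nonneg _) (hM t_c ⟨le_rfl, by linarith⟩)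
  -- integrability of the weight
  have wInt : ∀ τ, t_c < τ → IntervalIntegrable (fun u => (τ - u) ^ (-γ)) volume t_c τ := by
    intro τ hτ
    have base : IntervalIntegrable (fun x : ℝ => x ^ (-γ)) volume (τ - t_c) 0 :=
      intervalIntegral.intervalIntegrable_rpow' (by linarith)
    have shifted := base.comp_sub_left τ
    simpa using shifted
  have wVal : ∀ τ, t_c < τ → (∫ u in t_c..τ, (τ - u) ^ (-γ)) = (τ - t_c) ^ (1-γ) / (1-γ) := by
    intro τ hτ
    rw [intervalIntegral.integral_comp_sub_left (fun x => x ^ (-γ)) τ, sub_self,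
      integral_rpow (Or.inl (by linarith)),
      Real.zero_rpow (by intro hcon; linarith : -γ + 1 ≠ (0:ℝ))]
    rw [show -γ + 1 = 1 - γ by ring, sub_zero]
  -- formula for g near t_c
  have hftc : f t_c = 0 := by rw [hf t_c, hcz]; ring
  have g_eq : ∀ τ ∈ Ioo t_c (t_c+1), g τ = s t_c
      + (Real.sin (π*γ)/π) * ∫ u in t_c..τ, czH γ k tp A (s 0) u * (τ - u) ^ (-γ) := by
    intro τ hτ
    obtain ⟨hτ1, hτ2⟩ := hτ
    rw [hg τ hτ1, hftc, zero_mul, zero_add]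
    have congr1 : (∫ u in t_c..τ, deriv f u * (τ-u)^(-γ))
        = ∫ u in t_c..τ, (s t_c * ((u - t_c) ^ (γ-1) * (τ-u)^(-γ))
            + czH γ k tp A (s 0) u * (τ-u)^(-γ)) := by
      apply intervalIntegral.integral_congr_ae
      apply MeasureTheory.ae_of_all
      intro u hu
      rw [uIoc_of_le hτ1.le] at hu
      rw [deriv_eq u hu.1]
      ring
    rw [congr1, intervalIntegral.integral_add
        ((cz_beta_integrable hγ0 hγ1 hτ1).const_mul (s t_c))
        ((wInt τ hτ1).continuousOn_mul (Hcont.mono (by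
          rw [uIcc_of_le hτ1.le]
          exact Icc_subset_Icc le_rfl hτ2.le))),
      intervalIntegral.integral_const_mul, cz_beta_shift hγ0 hγ1 hτ1]
    field_simp
  -- the remainder tends to zero
  have hRb : ∀ τ ∈ Ioo t_c (t_c+1),
      ‖∫ u in t_c..τ, czH γ k tp A (s 0) u * (τ - u) ^ (-γ)‖
        ≤ M * ((τ - t_c) ^ (1-γ) / (1-γ)) := by
    intro τ hτ
    have h1 : ‖∫ u in t_c..τ, czH γ k tp A (s 0) u * (τ - u) ^ (-γ)‖
        ≤ |∫ u in t_c..τ, M * (τ - u) ^ (-γ)| := by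
      apply intervalIntegral.norm_integral_le_abs_of_norm_le
      · apply MeasureTheory.ae_restrict_of_forall_mem measurableSet_uIoc
        intro u hu
        rw [uIoc_of_le hτ.1.le] at hu
        have hw : (0:ℝ) ≤ (τ - u) ^ (-γ) := Real.rpow_nonneg (by linarith [hu.2]) _
        rw [Real.norm_eq_abs, abs_mul, abs_of_nonneg hw]
        apply mul_le_mul_of_nonneg_right _ hw
        exact hM u ⟨hu.1.le, by linarith [hu.2, hτ.2]⟩
      · exact (wInt τ hτ.1).const_mul M
    rw [intervalIntegral.integral_const_mul, wVal τ hτ.1] at h1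
    calc ‖∫ u in t_c..τ, czH γ k tp A (s 0) u * (τ - u) ^ (-γ)‖
        ≤ |M * ((τ - t_c) ^ (1-γ) / (1-γ))| := h1
      _ = M * ((τ - t_c) ^ (1-γ) / (1-γ)) := abs_of_nonneg (mul_nonneg hM0
          (div_nonneg (Real.rpow_nonneg (by linarith [hτ.1]) _) (by linarith)))
  have hRlim : Tendsto (fun τ => ∫ u in t_c..τ, czH γ k tp A (s 0) u * (τ - u) ^ (-γ))
      (nhdsWithin t_c (Set.Ioi t_c)) (nhds 0) := by
    apply squeeze_zero_norm'
    · filter_upwards [Ioo_mem_nhdsGT_of_mem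
        (⟨le_rfl, by linarith⟩ : t_c ∈ Ico t_c (t_c+1))] with τ hτ using hRb τ hτ
    · have t1 : Tendsto (fun τ : ℝ => τ - t_c) (nhdsWithin t_c (Set.Ioi t_c)) (nhds 0) := by
        have h0 : Tendsto (fun τ : ℝ => τ - t_c) (nhds t_c) (nhds (t_c - t_c)) :=
          (continuous_id.sub continuous_const).tendsto t_c
        rw [sub_self] at h0
        exact h0.mono_left nhdsWithin_le_nhds
      have t2 : Tendsto (fun x : ℝ => x ^ (1-γ)) (nhds 0) (nhds 0) := by
        have h0 := (Real.continuousAt_rpow_const 0 (1-γ) (Or.inr (by linarith))).tendsto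
        rwa [Real.zero_rpow (by linarith : (1:ℝ)-γ ≠ 0)] at h0
      have h3 := ((t2.comp t1).div_const (1-γ)).const_mul M
      simpa using h3
  have final : Tendsto (fun τ => s t_c + (Real.sin (π*γ)/π)
      * ∫ u in t_c..τ, czH γ k tp A (s 0) u * (τ - u) ^ (-γ))
      (nhdsWithin t_c (Set.Ioi t_c)) (nhds (s t_c)) := by
    have h0 := (hRlim.const_mul (Real.sin (π*γ)/π)).const_add (s t_c)
    simpa using h0
  apply final.congr'
  filter_upwards [Ioo_mem_nhdsGT_of_mem
    (⟨le_rfl, by linarith⟩ : t_c ∈ Ico t_c (t_c+1))] with τ hτ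
  exact (g_eq τ hτ).symm
end

section
/- For x > c > a > 0 and continuous σ on [a, c], the stress σ_ahead(x) = (x/√(x²−c²))·(1 − (2/π)∫_a^c √(c²−ξ²)/(x²−ξ²)·σ(ξ) dξ) satisfies lim_{x→c⁺} √(x−c)·σ_ahead(x) = √(c/2)·(1 − (2/π)∫_a^c σ(ξ)/√(c²−ξ²) dξ), provided the latter integral is finite. -/
open MeasureTheory Set Real Filter

/-- Identification of the stress intensity factor: for the Muskhelishvili stress ahead of
the cohesive zone tip `c`, `√(x−c)·σ_ahead(x)` tends, as `x → c⁺`, to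
`√(c/2)·(1 − (2/π)∫_a^c σ(ξ)/√(c²−ξ²) dξ)`, provided the latter integral is finite. -/
theorem sif_is_limit (a c : ℝ) (ha : 0 < a) (hac : a < c)
    (σ : ℝ → ℝ) (hσ : ContinuousOn σ (Set.Icc a c))
    (hint : IntervalIntegrable (fun ξ => σ ξ / Real.sqrt (c ^ 2 - ξ ^ 2)) volume a c) :
    Filter.Tendsto
      (fun x => Real.sqrt (x - c) *
        (x / Real.sqrt (x ^ 2 - c ^ 2) *
          (1 - (2 / π) * ∫ ξ in a..c,
            Real.sqrt (c ^ 2 - ξ ^ 2) / (x ^ 2 - ξ ^ 2) * σ ξ)))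
      (nhdsWithin c (Set.Ioi c))
      (nhds (Real.sqrt (c / 2) *
        (1 - (2 / π) * ∫ ξ in a..c, σ ξ / Real.sqrt (c ^ 2 - ξ ^ 2)))) := by
  have hc : 0 < c := ha.trans hac
  -- Part 1: the prefactor √(x-c) * x / √(x²-c²) tends to √(c/2)
  have h1 : Tendsto (fun x => Real.sqrt (x - c) * (x / Real.sqrt (x ^ 2 - c ^ 2)))
      (nhdsWithin c (Set.Ioi c)) (nhds (Real.sqrt (c / 2))) := by
    have hval : Real.sqrt (c / 2) = c / Real.sqrt (c + c) := by
      rw [show c / 2 = c ^ 2 / (c + c) by field_simp; ring,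
        Real.sqrt_div (by positivity), Real.sqrt_sq hc.le]
    rw [hval]
    have hcont : Tendsto (fun x => x / Real.sqrt (x + c)) (nhdsWithin c (Set.Ioi c))
        (nhds (c / Real.sqrt (c + c))) := by
      apply Tendsto.mono_left _ nhdsWithin_le_nhds
      apply Tendsto.div tendsto_id
      · exact (Real.continuous_sqrt.tendsto _).comp (tendsto_id.add tendsto_const_nhds)
      · positivity
    refine hcont.congr' ?_
    filter_upwards [self_mem_nhdsWithin] with x (hx : c < x)
    have hxc : 0 < x - c := by linarith
    have hxc2 : 0 < x + c := by linarith
    have hs : Real.sqrt (x ^ 2 - c ^ 2) = Real.sqrt (x - c) * Real.sqrt (x + c) := by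
      rw [← Real.sqrt_mul hxc.le]; ring_nf
    have h1' : Real.sqrt (x - c) ≠ 0 := by positivity
    have h2' : Real.sqrt (x + c) ≠ 0 := by positivity
    rw [hs]
    field_simp
  -- Part 2: the integral tends to the limit integral
  have h2 : Tendsto (fun x => ∫ ξ in a..c, Real.sqrt (c ^ 2 - ξ ^ 2) / (x ^ 2 - ξ ^ 2) * σ ξ)
      (nhdsWithin c (Set.Ioi c))
      (nhds (∫ ξ in a..c, σ ξ / Real.sqrt (c ^ 2 - ξ ^ 2))) := by
    have hrw : ∀ (f : ℝ → ℝ), (∫ ξ in a..c, f ξ) = ∫ ξ in Set.Ioc a c, f ξ := fun f =>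
      intervalIntegral.integral_of_le hac.le
    simp only [hrw]
    have hσm : AEStronglyMeasurable σ (volume.restrict (Set.Ioc a c)) :=
      (hσ.mono Set.Ioc_subset_Icc_self).aestronglyMeasurable measurableSet_Ioc
    have hne : ∀ᵐ ξ ∂(volume.restrict (Set.Ioc a c)), ξ ≠ c := by
      refine ae_iff.mpr ?_
      have h0 : (volume.restrict (Set.Ioc a c)) {c} = 0 := by
        rw [Measure.restrict_apply (measurableSet_singleton c)]
        exact measure_mono_null Set.inter_subset_left (Real.volume_singleton)
      simpa using h0
    -- a.e. point of Ioc a c with ξ ≠ c lies in Ioo a c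
    have hpos : ∀ ξ, ξ ∈ Set.Ioc a c → ξ ≠ c → 0 < c ^ 2 - ξ ^ 2 := by
      intro ξ hξ hξc
      have h1 : a < ξ := hξ.1
      have h2 : ξ < c := lt_of_le_of_ne hξ.2 hξc
      nlinarith
    apply tendsto_integral_filter_of_dominated_convergence
      (fun ξ => |σ ξ| / Real.sqrt (c ^ 2 - ξ ^ 2))
    · filter_upwards with x
      exact ((Real.continuous_sqrt.comp (by continuity)).measurable.div
        (by measurability)).aestronglyMeasurable.mul hσm
    · filter_upwards [self_mem_nhdsWithin] with x (hx : c < x)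
      filter_upwards [ae_restrict_mem measurableSet_Ioc, hne] with ξ hξ hξc
      have hp : 0 < c ^ 2 - ξ ^ 2 := hpos ξ hξ hξc
      have hxp : c ^ 2 - ξ ^ 2 ≤ x ^ 2 - ξ ^ 2 := by nlinarith [hξ.1, ha]
      have hsp : 0 < Real.sqrt (c ^ 2 - ξ ^ 2) := Real.sqrt_pos.mpr hp
      rw [Real.norm_eq_abs, abs_mul, abs_div, abs_of_nonneg (Real.sqrt_nonneg _),
        abs_of_pos (lt_of_lt_of_le hp hxp)]
      rw [div_mul_eq_mul_div, div_le_div_iff₀ (lt_of_lt_of_le hp hxp) hsp]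
      calc Real.sqrt (c ^ 2 - ξ ^ 2) * |σ ξ| * Real.sqrt (c ^ 2 - ξ ^ 2)
          = |σ ξ| * (c ^ 2 - ξ ^ 2) := by
            rw [show Real.sqrt (c ^ 2 - ξ ^ 2) * |σ ξ| * Real.sqrt (c ^ 2 - ξ ^ 2)
              = |σ ξ| * (Real.sqrt (c ^ 2 - ξ ^ 2) * Real.sqrt (c ^ 2 - ξ ^ 2)) by ring,
              Real.mul_self_sqrt hp.le]
        _ ≤ |σ ξ| * (x ^ 2 - ξ ^ 2) := by
            exact mul_le_mul_of_nonneg_left hxp (abs_nonneg _)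
    · rw [intervalIntegrable_iff_integrableOn_Ioc_of_le hac.le] at hint
      have hb := hint.norm
      refine hb.congr (Filter.Eventually.of_forall fun ξ => ?_)
      simp [Real.norm_eq_abs, abs_div, abs_of_nonneg (Real.sqrt_nonneg (c ^ 2 - ξ ^ 2))]
    · filter_upwards [ae_restrict_mem measurableSet_Ioc, hne] with ξ hξ hξc
      have hp : 0 < c ^ 2 - ξ ^ 2 := hpos ξ hξ hξc
      have hlim : Tendsto (fun x : ℝ => Real.sqrt (c ^ 2 - ξ ^ 2) / (x ^ 2 - ξ ^ 2) * σ ξ)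
          (nhds c) (nhds (Real.sqrt (c ^ 2 - ξ ^ 2) / (c ^ 2 - ξ ^ 2) * σ ξ)) := by
        apply Tendsto.mul _ tendsto_const_nhds
        exact (tendsto_const_nhds.div (by
          exact ((continuous_pow 2).sub continuous_const).tendsto c) hp.ne')
      have hval : Real.sqrt (c ^ 2 - ξ ^ 2) / (c ^ 2 - ξ ^ 2) * σ ξ
          = σ ξ / Real.sqrt (c ^ 2 - ξ ^ 2) := by
        rw [Real.sqrt_div_self']; ring
      rw [hval] at hlim
      exact hlim.mono_left nhdsWithin_le_nhds
  -- combine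
  have hB : Tendsto
      (fun x => 1 - (2 / π) * ∫ ξ in a..c, Real.sqrt (c ^ 2 - ξ ^ 2) / (x ^ 2 - ξ ^ 2) * σ ξ)
      (nhdsWithin c (Set.Ioi c))
      (nhds (1 - (2 / π) * ∫ ξ in a..c, σ ξ / Real.sqrt (c ^ 2 - ξ ^ 2))) :=
    tendsto_const_nhds.sub (h2.const_mul (2 / π))
  exact (h1.mul hB).congr (fun x => by ring)
end

section
/- Under the zero stress intensity factor condition ∫_a^c σ(ξ)/√(c²−ξ²) dξ = π/2 with σ continuous on [a,c], the stress ahead of the cohesive zone σ_ahead(x) = (2x/π)·√(x²−c²)·∫_a^c σ(ξ)/((x²−ξ²)√(c²−ξ²)) dξ is bounded as x → c⁺, with limit σ(c). -/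
open MeasureTheory Set Real Filter

noncomputable def Fant (c x ξ : ℝ) : ℝ :=
  (π / 2 - arctan (x * Real.sqrt (c ^ 2 - ξ ^ 2) / (ξ * Real.sqrt (x ^ 2 - c ^ 2)))) /
    (x * Real.sqrt (x ^ 2 - c ^ 2))

lemma Fant_hasDerivAt {c x ξ : ℝ} (hξ : 0 < ξ) (hξc : ξ < c) (hcx : c < x) :
    HasDerivAt (Fant c x) (1 / ((x ^ 2 - ξ ^ 2) * Real.sqrt (c ^ 2 - ξ ^ 2))) ξ := by
  have hc : 0 < c := hξ.trans hξc
  have hx : 0 < x := hc.trans hcx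
  have hs2 : 0 < x ^ 2 - c ^ 2 := by nlinarith
  have hw2 : 0 < c ^ 2 - ξ ^ 2 := by nlinarith
  set s := Real.sqrt (x ^ 2 - c ^ 2) with hs_def
  set w := Real.sqrt (c ^ 2 - ξ ^ 2) with hw_def
  have hs : 0 < s := Real.sqrt_pos.2 hs2
  have hw : 0 < w := Real.sqrt_pos.2 hw2
  have hssq : s ^ 2 = x ^ 2 - c ^ 2 := Real.sq_sqrt hs2.le
  have hwsq : w ^ 2 = c ^ 2 - ξ ^ 2 := Real.sq_sqrt hw2.le
  have hwd : HasDerivAt (fun t => Real.sqrt (c ^ 2 - t ^ 2)) (-ξ / w) ξ := by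
    have h1 : HasDerivAt (fun t : ℝ => c ^ 2 - t ^ 2) (-(2 * ξ)) ξ := by
      simpa using ((hasDerivAt_pow 2 ξ).const_sub (c ^ 2))
    have := (Real.hasDerivAt_sqrt (ne_of_gt hw2)).comp ξ h1
    refine this.congr_deriv ?_
    field_simp [hw_def]
    ring
  have h2 : HasDerivAt (fun t : ℝ => t * s) s ξ := by
    simpa using (hasDerivAt_id ξ).mul_const s
  have hud : HasDerivAt (fun t => x * Real.sqrt (c ^ 2 - t ^ 2) / (t * s))
      ((x * (-ξ / w) * (ξ * s) - x * w * s) / (ξ * s) ^ 2) ξ :=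
    (hwd.const_mul x).div h2 (by positivity)
  have harct := (Real.hasDerivAt_arctan (x * w / (ξ * s))).comp ξ hud
  have hF : HasDerivAt (Fant c x)
      ((-(1 / (1 + (x * w / (ξ * s)) ^ 2) *
        ((x * (-ξ / w) * (ξ * s) - x * w * s) / (ξ * s) ^ 2))) / (x * s)) ξ := by
    unfold Fant
    exact (((harct.const_sub (π / 2))).div_const (x * s))
  convert hF using 1
  have h1 : 1 + (x * w / (ξ * s)) ^ 2 = c ^ 2 * (x ^ 2 - ξ ^ 2) / (ξ ^ 2 * s ^ 2) := by
    rw [div_pow, mul_pow, mul_pow, hssq, hwsq]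
    field_simp
    ring
  rw [h1]
  have hxξ : 0 < x ^ 2 - ξ ^ 2 := by nlinarith
  field_simp
  linear_combination (-1) * hwsq

lemma Fant_continuousOn {a c x : ℝ} (ha : 0 < a) (hac : a < c) (hcx : c < x) :
    ContinuousOn (Fant c x) (Icc a c) := by
  apply ContinuousOn.div
  · apply ContinuousOn.sub continuousOn_const
    apply Real.continuous_arctan.comp_continuousOn
    apply ContinuousOn.div
    · exact (continuous_const.mul ((continuous_const.sub (continuous_pow 2)).sqrt)).continuousOn
    · exact (continuous_id.mul continuous_const).continuousOn
    · intro ξ hξ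
      have hξ0 : 0 < ξ := ha.trans_le hξ.1
      have hs : 0 < Real.sqrt (x ^ 2 - c ^ 2) := Real.sqrt_pos.2 (by nlinarith [ha.trans hac])
      positivity
  · exact continuousOn_const
  · intro ξ _
    have hs : 0 < Real.sqrt (x ^ 2 - c ^ 2) := Real.sqrt_pos.2 (by nlinarith [ha.trans hac])
    have hx : 0 < x := by nlinarith [ha.trans hac]
    positivity

lemma phi_nonneg {c x : ℝ} (hcx : c < x) (hc : 0 < c) (ξ : ℝ) :
    0 ≤ 1 / ((x ^ 2 - ξ ^ 2) * Real.sqrt (c ^ 2 - ξ ^ 2)) := by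
  rcases le_or_gt (c ^ 2 - ξ ^ 2) 0 with h | h
  · rw [Real.sqrt_eq_zero_of_nonpos h, mul_zero, div_zero]
  · have h2 : 0 < x ^ 2 - ξ ^ 2 := by nlinarith
    positivity

lemma phi_intervalIntegrable {a c x : ℝ} (ha : 0 < a) (hac : a < c) (hcx : c < x) :
    IntervalIntegrable (fun ξ => 1 / ((x ^ 2 - ξ ^ 2) * Real.sqrt (c ^ 2 - ξ ^ 2)))
      volume a c := by
  apply intervalIntegral.intervalIntegrable_deriv_of_nonneg (g := Fant c x)
  · rw [uIcc_of_le hac.le]; exact Fant_continuousOn ha hac hcx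
  · rw [min_eq_left hac.le, max_eq_right hac.le]
    intro ξ hξ
    exact Fant_hasDerivAt (ha.trans hξ.1) hξ.2 hcx
  · intro ξ _
    exact phi_nonneg hcx (ha.trans hac) ξ

lemma phi_integral_eq {a c x : ℝ} (ha : 0 < a) (hac : a < c) (hcx : c < x) :
    (∫ ξ in a..c, 1 / ((x ^ 2 - ξ ^ 2) * Real.sqrt (c ^ 2 - ξ ^ 2)))
      = arctan (x * Real.sqrt (c ^ 2 - a ^ 2) / (a * Real.sqrt (x ^ 2 - c ^ 2)))
        / (x * Real.sqrt (x ^ 2 - c ^ 2)) := by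
  rw [intervalIntegral.integral_eq_sub_of_hasDeriv_right_of_le hac.le
    (Fant_continuousOn ha hac hcx)
    (fun ξ hξ => (Fant_hasDerivAt (ha.trans hξ.1) hξ.2 hcx).hasDerivWithinAt)
    (phi_intervalIntegrable ha hac hcx)]
  unfold Fant
  have h0 : c ^ 2 - c ^ 2 = 0 := by ring
  rw [h0, Real.sqrt_zero, mul_zero, zero_div, Real.arctan_zero]
  have hs : 0 < Real.sqrt (x ^ 2 - c ^ 2) := Real.sqrt_pos.2 (by nlinarith [ha.trans hac])
  have hx : 0 < x := by nlinarith [ha.trans hac]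
  field_simp
  ring

lemma mul_phi_integrable {a c x : ℝ} (ha : 0 < a) (hac : a < c) (hcx : c < x)
    {f : ℝ → ℝ} {M : ℝ} (hf : ContinuousOn f (Icc a c))
    (hM : ∀ ξ ∈ Icc a c, |f ξ| ≤ M) {a' c' : ℝ} (ha' : a ≤ a') (hc' : a' ≤ c') (hcc' : c' ≤ c) :
    IntervalIntegrable (fun ξ => f ξ * (1 / ((x ^ 2 - ξ ^ 2) * Real.sqrt (c ^ 2 - ξ ^ 2))))
      volume a' c' := by
  have hc : (0:ℝ) < c := ha.trans hac
  have hphi : IntervalIntegrable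
      (fun ξ => M * (1 / ((x ^ 2 - ξ ^ 2) * Real.sqrt (c ^ 2 - ξ ^ 2)))) volume a' c' :=
    ((phi_intervalIntegrable ha hac hcx).mono_set (by
      rw [uIcc_of_le hc', uIcc_of_le hac.le]
      exact Icc_subset_Icc ha' hcc')).const_mul M
  apply hphi.mono_fun'
  · have hsub : Set.uIoc a' c' ⊆ Icc a c := by
      rw [uIoc_of_le hc']
      exact Ioc_subset_Icc_self.trans (Icc_subset_Icc ha' hcc')
    have h1 : AEMeasurable f (volume.restrict (Set.uIoc a' c')) :=
      (hf.mono hsub).aemeasurable measurableSet_uIoc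
    have h2 : Measurable fun ξ : ℝ => 1 / ((x ^ 2 - ξ ^ 2) * Real.sqrt (c ^ 2 - ξ ^ 2)) := by
      have : Continuous fun ξ : ℝ => (x ^ 2 - ξ ^ 2) * Real.sqrt (c ^ 2 - ξ ^ 2) :=
        ((continuous_const.sub (continuous_pow 2)).mul
          ((continuous_const.sub (continuous_pow 2)).sqrt))
      simp only [one_div]
      exact this.measurable.inv
    exact (h1.mul h2.aemeasurable).aestronglyMeasurable
  · rw [uIoc_of_le hc', Filter.EventuallyLE, ae_restrict_iff' measurableSet_Ioc]
    filter_upwards with ξ hξ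
    have hmem : ξ ∈ Icc a c := ⟨ha'.trans hξ.1.le, hξ.2.trans hcc'⟩
    have h1 := phi_nonneg hcx hc ξ
    calc ‖f ξ * (1 / ((x ^ 2 - ξ ^ 2) * Real.sqrt (c ^ 2 - ξ ^ 2)))‖
        = |f ξ| * (1 / ((x ^ 2 - ξ ^ 2) * Real.sqrt (c ^ 2 - ξ ^ 2))) := by
          rw [norm_mul, Real.norm_eq_abs, Real.norm_eq_abs, abs_of_nonneg h1]
      _ ≤ M * (1 / ((x ^ 2 - ξ ^ 2) * Real.sqrt (c ^ 2 - ξ ^ 2))) :=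
          mul_le_mul_of_nonneg_right (hM ξ hmem) h1

set_option maxHeartbeats 2000000 in
/-- Under the zero stress intensity factor condition
`∫_a^c σ(ξ)/√(c²−ξ²) dξ = π/2` with `σ` continuous on `[a, c]`, the reduced
Muskhelishvili stress ahead of the cohesive zone tip,
`σ_ahead(x) = (2x/π)·√(x²−c²)·∫_a^c σ(ξ)/((x²−ξ²)√(c²−ξ²)) dξ`,
tends to `σ(c)` as `x → c⁺` (in particular it is bounded near `c`). -/
theorem stress_ahead_tendsto (a c : ℝ) (ha : 0 < a) (hac : a < c)
    (σ : ℝ → ℝ) (hσ : ContinuousOn σ (Set.Icc a c))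
    (hK : (∫ ξ in a..c, σ ξ / Real.sqrt (c ^ 2 - ξ ^ 2)) = π / 2) :
    Filter.Tendsto
      (fun x => (2 * x / π) * Real.sqrt (x ^ 2 - c ^ 2) *
        ∫ ξ in a..c, σ ξ / ((x ^ 2 - ξ ^ 2) * Real.sqrt (c ^ 2 - ξ ^ 2)))
      (nhdsWithin c (Set.Ioi c)) (nhds (σ c)) := by
  have hc : (0:ℝ) < c := ha.trans hac
  -- bound on the remainder r ξ = σ ξ - σ c
  obtain ⟨M, hM⟩ := isCompact_Icc.exists_bound_of_continuousOn (hσ.sub continuousOn_const)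
  have hM' : ∀ ξ ∈ Icc a c, |σ ξ - σ c| ≤ M := fun ξ hξ => by
    simpa [Real.norm_eq_abs] using hM ξ hξ
  have hMnn : 0 ≤ M := (abs_nonneg _).trans (hM' a ⟨le_refl a, hac.le⟩)
  have hr : ContinuousOn (fun ξ => σ ξ - σ c) (Icc a c) := hσ.sub continuousOn_const
  -- the main term
  set g : ℝ → ℝ := fun x =>
    x * Real.sqrt (c ^ 2 - a ^ 2) / (a * Real.sqrt (x ^ 2 - c ^ 2)) with hg_def
  set main : ℝ → ℝ := fun x => σ c * (2 / π * arctan (g x)) with hmain_def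
  set rem : ℝ → ℝ := fun x => 2 * x / π * Real.sqrt (x ^ 2 - c ^ 2) *
    ∫ ξ in a..c, (σ ξ - σ c) * (1 / ((x ^ 2 - ξ ^ 2) * Real.sqrt (c ^ 2 - ξ ^ 2))) with hrem_def
  -- Step 1: eventual decomposition
  have hdecomp : ∀ x ∈ Ioi c,
      (2 * x / π) * Real.sqrt (x ^ 2 - c ^ 2) *
        (∫ ξ in a..c, σ ξ / ((x ^ 2 - ξ ^ 2) * Real.sqrt (c ^ 2 - ξ ^ 2)))
      = main x + rem x := by
    intro x hx
    have hcx : c < x := hx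
    have hx0 : 0 < x := hc.trans hcx
    have hs : 0 < Real.sqrt (x ^ 2 - c ^ 2) := Real.sqrt_pos.2 (by nlinarith)
    have hint1 : IntervalIntegrable
        (fun ξ => (σ ξ - σ c) * (1 / ((x ^ 2 - ξ ^ 2) * Real.sqrt (c ^ 2 - ξ ^ 2))))
        volume a c :=
      mul_phi_integrable ha hac hcx hr hM' (le_refl a) hac.le (le_refl c)
    have hint2 : IntervalIntegrable
        (fun ξ => σ c * (1 / ((x ^ 2 - ξ ^ 2) * Real.sqrt (c ^ 2 - ξ ^ 2)))) volume a c :=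
      (phi_intervalIntegrable ha hac hcx).const_mul (σ c)
    have hsplit : (∫ ξ in a..c, σ ξ / ((x ^ 2 - ξ ^ 2) * Real.sqrt (c ^ 2 - ξ ^ 2)))
        = (∫ ξ in a..c, (σ ξ - σ c) * (1 / ((x ^ 2 - ξ ^ 2) * Real.sqrt (c ^ 2 - ξ ^ 2))))
          + σ c * ∫ ξ in a..c, 1 / ((x ^ 2 - ξ ^ 2) * Real.sqrt (c ^ 2 - ξ ^ 2)) := by
      rw [← intervalIntegral.integral_const_mul, ← intervalIntegral.integral_add hint1 hint2]
      apply intervalIntegral.integral_congr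
      intro ξ _
      field_simp
      ring
    rw [hsplit, phi_integral_eq ha hac hcx, mul_add, add_comm]
    simp only [hmain_def, hrem_def, hg_def]
    congr 1
    field_simp
  -- Step 2: main → σ c
  have hmain_tendsto : Tendsto main (nhdsWithin c (Ioi c)) (nhds (σ c)) := by
    have hnum : Tendsto (fun x : ℝ => x * Real.sqrt (c ^ 2 - a ^ 2))
        (nhdsWithin c (Ioi c)) (nhds (c * Real.sqrt (c ^ 2 - a ^ 2))) :=
      ((continuous_id.mul continuous_const).tendsto c).mono_left nhdsWithin_le_nhds
    have hnum_pos : 0 < c * Real.sqrt (c ^ 2 - a ^ 2) := by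
      have : 0 < Real.sqrt (c ^ 2 - a ^ 2) := Real.sqrt_pos.2 (by nlinarith)
      positivity
    have hden : Tendsto (fun x : ℝ => a * Real.sqrt (x ^ 2 - c ^ 2))
        (nhdsWithin c (Ioi c)) (nhdsWithin 0 (Ioi 0)) := by
      rw [tendsto_nhdsWithin_iff]
      constructor
      · have hcont : Continuous fun x : ℝ => a * Real.sqrt (x ^ 2 - c ^ 2) :=
          continuous_const.mul ((continuous_pow 2).sub continuous_const).sqrt
        have := (hcont.tendsto c).mono_left (nhdsWithin_le_nhds (s := Ioi c))
        simpa using this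
      · filter_upwards [self_mem_nhdsWithin] with x hx
        have hcx : c < x := hx
        have : 0 < Real.sqrt (x ^ 2 - c ^ 2) := Real.sqrt_pos.2 (by nlinarith)
        exact mul_pos ha this
    have hg_top : Tendsto g (nhdsWithin c (Ioi c)) atTop := by
      have hinv : Tendsto (fun x : ℝ => (a * Real.sqrt (x ^ 2 - c ^ 2))⁻¹)
          (nhdsWithin c (Ioi c)) atTop := tendsto_inv_nhdsGT_zero.comp hden
      have := hnum.pos_mul_atTop hnum_pos hinv
      simpa [hg_def, div_eq_mul_inv] using this
    have harc : Tendsto (fun x => arctan (g x)) (nhdsWithin c (Ioi c)) (nhds (π / 2)) :=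
      (Real.tendsto_arctan_atTop.mono_right nhdsWithin_le_nhds).comp hg_top
    have : Tendsto main (nhdsWithin c (Ioi c)) (nhds (σ c * (2 / π * (π / 2)))) :=
      (harc.const_mul (2 / π)).const_mul (σ c)
    convert this using 2
    field_simp
  -- Step 3: rem → 0
  have hrem_tendsto : Tendsto rem (nhdsWithin c (Ioi c)) (nhds 0) := by
    rw [NormedAddCommGroup.tendsto_nhds_zero]
    intro ε hε
    -- choose δ from continuity at c
    have hσc : ContinuousWithinAt σ (Icc a c) c := hσ c ⟨hac.le, le_refl c⟩
    rw [Metric.continuousWithinAt_iff] at hσc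
    obtain ⟨δ, hδ, hδ'⟩ := hσc (ε / 4) (by positivity)
    set b : ℝ := max a (c - δ / 2) with hb_def
    have hab : a ≤ b := le_max_left _ _
    have hbc : b < c := by
      rw [hb_def, max_lt_iff]
      constructor
      · exact hac
      · linarith
    have hrb : ∀ ξ ∈ Icc b c, |σ ξ - σ c| ≤ ε / 4 := by
      intro ξ hξ
      have h1 : ξ ∈ Icc a c := ⟨hab.trans hξ.1, hξ.2⟩
      have h2 : dist ξ c < δ := by
        rw [Real.dist_eq, abs_of_nonpos (by linarith [hξ.2])]
        have : c - δ / 2 ≤ b := le_max_right _ _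
        linarith [hξ.1]
      have := hδ' h1 h2
      rw [Real.dist_eq] at this
      exact this.le
    have hb0 : 0 < b := ha.trans_le hab
    have hcb2 : 0 < c ^ 2 - b ^ 2 := by nlinarith
    set K : ℝ := M * (1 / ((c ^ 2 - b ^ 2) * Real.sqrt (c ^ 2 - b ^ 2))) with hK_def
    have hKnn : 0 ≤ K := by
      have : 0 < Real.sqrt (c ^ 2 - b ^ 2) := Real.sqrt_pos.2 hcb2
      positivity
    -- the vanishing first part
    have hh_tendsto : Tendsto (fun x : ℝ => 2 * x / π * Real.sqrt (x ^ 2 - c ^ 2) * (K * (b - a)))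
        (nhdsWithin c (Ioi c)) (nhds 0) := by
      have hcont : Continuous fun x : ℝ =>
          2 * x / π * Real.sqrt (x ^ 2 - c ^ 2) * (K * (b - a)) := by
        apply Continuous.mul
        apply Continuous.mul
        · exact (continuous_const.mul continuous_id).div_const π
        · exact ((continuous_pow 2).sub continuous_const).sqrt
        · exact continuous_const
      have h0 : (2 * c / π * Real.sqrt (c ^ 2 - c ^ 2) * (K * (b - a))) = 0 := by
        simp
      have := (hcont.tendsto c).mono_left (nhdsWithin_le_nhds (s := Ioi c))
      rwa [h0] at this
    rw [NormedAddCommGroup.tendsto_nhds_zero] at hh_tendsto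
    filter_upwards [hh_tendsto (ε / 2) (by positivity), self_mem_nhdsWithin] with x hhx hx
    have hcx : c < x := hx
    have hx0 : 0 < x := hc.trans hcx
    have hs : 0 < Real.sqrt (x ^ 2 - c ^ 2) := Real.sqrt_pos.2 (by nlinarith)
    set φ : ℝ → ℝ := fun ξ => 1 / ((x ^ 2 - ξ ^ 2) * Real.sqrt (c ^ 2 - ξ ^ 2)) with hφ_def
    have hint_ab : IntervalIntegrable (fun ξ => (σ ξ - σ c) * φ ξ) volume a b :=
      mul_phi_integrable ha hac hcx hr hM' (le_refl a) hab hbc.le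
    have hint_bc : IntervalIntegrable (fun ξ => (σ ξ - σ c) * φ ξ) volume b c :=
      mul_phi_integrable ha hac hcx hr hM' hab hbc.le (le_refl c)
    -- bound on [a, b]
    have hbound_ab : |∫ ξ in a..b, (σ ξ - σ c) * φ ξ| ≤ K * (b - a) := by
      have h1 : ∀ ξ ∈ Set.uIoc a b, ‖(σ ξ - σ c) * φ ξ‖ ≤ K := by
        intro ξ hξ
        rw [uIoc_of_le hab] at hξ
        have hmem : ξ ∈ Icc a c := ⟨hξ.1.le, hξ.2.trans hbc.le⟩
        have hξ0 : 0 < ξ := ha.trans hξ.1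
        have hcξ2 : 0 < c ^ 2 - ξ ^ 2 := by nlinarith [hξ.2.trans hbc.le, hξ.2, hbc]
        have hxξ2 : 0 < x ^ 2 - ξ ^ 2 := by nlinarith
        have hφle : φ ξ ≤ 1 / ((c ^ 2 - b ^ 2) * Real.sqrt (c ^ 2 - b ^ 2)) := by
          apply one_div_le_one_div_of_le
          · exact mul_pos hcb2 (Real.sqrt_pos.2 hcb2)
          · apply mul_le_mul
            · nlinarith [hξ.2]
            · exact Real.sqrt_le_sqrt (by nlinarith [hξ.2])
            · exact Real.sqrt_nonneg _
            · nlinarith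
        rw [norm_mul, Real.norm_eq_abs, Real.norm_eq_abs,
          abs_of_nonneg (phi_nonneg hcx hc ξ)]
        calc |σ ξ - σ c| * φ ξ ≤ M * (1 / ((c ^ 2 - b ^ 2) * Real.sqrt (c ^ 2 - b ^ 2))) :=
              mul_le_mul (hM' ξ hmem) hφle (phi_nonneg hcx hc ξ) hMnn
          _ = K := rfl
      calc |∫ ξ in a..b, (σ ξ - σ c) * φ ξ| = ‖∫ ξ in a..b, (σ ξ - σ c) * φ ξ‖ :=
            (Real.norm_eq_abs _).symm
        _ ≤ K * |b - a| := intervalIntegral.norm_integral_le_of_norm_le_const h1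
        _ = K * (b - a) := by rw [abs_of_nonneg (by linarith)]
    -- bound on [b, c]
    have hbound_bc : |∫ ξ in b..c, (σ ξ - σ c) * φ ξ| ≤
        (ε / 4) * ∫ ξ in a..c, φ ξ := by
      have habs_int : IntervalIntegrable (fun ξ => |(σ ξ - σ c) * φ ξ|) volume b c :=
        hint_bc.abs
      have hconst_int : IntervalIntegrable (fun ξ => (ε / 4) * φ ξ) volume b c :=
        ((phi_intervalIntegrable ha hac hcx).mono_set
          (by rw [uIcc_of_le hbc.le, uIcc_of_le hac.le]
              exact Icc_subset_Icc hab (le_refl c))).const_mul _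
      calc |∫ ξ in b..c, (σ ξ - σ c) * φ ξ| ≤ ∫ ξ in b..c, |(σ ξ - σ c) * φ ξ| :=
            intervalIntegral.abs_integral_le_integral_abs hbc.le
        _ ≤ ∫ ξ in b..c, (ε / 4) * φ ξ := by
            apply intervalIntegral.integral_mono_on hbc.le habs_int hconst_int
            intro ξ hξ
            rw [abs_mul, abs_of_nonneg (phi_nonneg hcx hc ξ)]
            exact mul_le_mul_of_nonneg_right (hrb ξ hξ) (phi_nonneg hcx hc ξ)
        _ = (ε / 4) * ∫ ξ in b..c, φ ξ := intervalIntegral.integral_const_mul _ _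
        _ ≤ (ε / 4) * ∫ ξ in a..c, φ ξ := by
            apply mul_le_mul_of_nonneg_left _ (by positivity)
            apply intervalIntegral.integral_mono_interval hab hbc.le (le_refl c)
            · exact Eventually.of_forall fun ξ => phi_nonneg hcx hc ξ
            · exact phi_intervalIntegrable ha hac hcx
    -- assemble the estimate
    have hsplit2 : (∫ ξ in a..c, (σ ξ - σ c) * φ ξ)
        = (∫ ξ in a..b, (σ ξ - σ c) * φ ξ) + ∫ ξ in b..c, (σ ξ - σ c) * φ ξ :=
      (intervalIntegral.integral_add_adjacent_intervals hint_ab hint_bc).symm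
    have hA := phi_integral_eq ha hac hcx
    have hπ : (0:ℝ) < π := Real.pi_pos
    have h2xπ : 0 ≤ 2 * x / π * Real.sqrt (x ^ 2 - c ^ 2) := by positivity
    have hIbound : |∫ ξ in a..c, (σ ξ - σ c) * φ ξ|
        ≤ K * (b - a) + (ε / 4) * ∫ ξ in a..c, φ ξ := by
      rw [hsplit2]
      exact (abs_add_le _ _).trans (add_le_add hbound_ab hbound_bc)
    have harcle : 2 / π * arctan (g x) ≤ 1 := by
      have h1 : arctan (g x) ≤ π / 2 := (Real.arctan_lt_pi_div_two _).le
      rw [div_mul_eq_mul_div, div_le_one hπ]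
      linarith
    have harcnn : 0 ≤ ε / 4 * (2 / π * arctan (g x)) → True := fun _ => trivial
    have key : ‖rem x‖ ≤ 2 * x / π * Real.sqrt (x ^ 2 - c ^ 2) * (K * (b - a))
        + ε / 4 * (2 / π * arctan (g x)) := by
      have h1 : ‖rem x‖ = 2 * x / π * Real.sqrt (x ^ 2 - c ^ 2) *
          |∫ ξ in a..c, (σ ξ - σ c) * φ ξ| := by
        rw [hrem_def]
        rw [Real.norm_eq_abs, abs_mul, abs_of_nonneg h2xπ]
      rw [h1]
      calc 2 * x / π * Real.sqrt (x ^ 2 - c ^ 2) * |∫ ξ in a..c, (σ ξ - σ c) * φ ξ|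
          ≤ 2 * x / π * Real.sqrt (x ^ 2 - c ^ 2) *
            (K * (b - a) + (ε / 4) * ∫ ξ in a..c, φ ξ) :=
            mul_le_mul_of_nonneg_left hIbound h2xπ
        _ = 2 * x / π * Real.sqrt (x ^ 2 - c ^ 2) * (K * (b - a))
            + ε / 4 * (2 / π * arctan (g x)) := by
            rw [hA, hg_def]
            field_simp
    have hfirst : 2 * x / π * Real.sqrt (x ^ 2 - c ^ 2) * (K * (b - a)) < ε / 2 :=
      (le_abs_self _).trans_lt (by rw [Real.norm_eq_abs] at hhx; exact hhx)
    have hsecond : ε / 4 * (2 / π * arctan (g x)) ≤ ε / 4 := by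
      have h0 : 0 ≤ arctan (g x) ∨ True := Or.inr trivial
      calc ε / 4 * (2 / π * arctan (g x)) ≤ ε / 4 * 1 :=
            mul_le_mul_of_nonneg_left harcle (by positivity)
        _ = ε / 4 := mul_one _
    calc ‖rem x‖ ≤ 2 * x / π * Real.sqrt (x ^ 2 - c ^ 2) * (K * (b - a))
          + ε / 4 * (2 / π * arctan (g x)) := key
      _ < ε / 2 + ε / 4 := by linarith
      _ < ε := by linarith
  -- final assembly
  have hsum := hmain_tendsto.add hrem_tendsto
  rw [add_zero] at hsum
  apply hsum.congr'
  filter_upwards [self_mem_nhdsWithin] with x hx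
  exact (hdecomp x hx).symm
end
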